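/- Let n ≥ 2 be a natural number and let x_1, ..., x_n be nonnegative real numbers with arithmetic mean A = (x_1 + ... + x_n)/n and geometric mean G = (x_1 x_2 ... x_n)^(1/n). Then A - G = (1/(n(n-1))) ∑_{1 ≤ i < j ≤ n} (√(x_i) - √(x_j))^2 if and only if one of the following holds: (i) n = 2; (ii) all but one of the numbers x_1, ..., x_n are zero; (iii) all of the numbers x_1, ..., x_n are equal. -/

import Mathlib

open Finset Real

lemma sum_Ioi_swap {n : ℕ} (f : Fin n → ℝ) :
    ∑ i, ∑ j ∈ Finset.Ioi i, f j = ∑ j : Fin n, (j : ℕ) * f j := by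
  rw [Finset.sum_comm' (t' := Finset.univ) (s' := fun j => Finset.Iio j)
    (by intro x y; simp [and_comm])]
  simp [Finset.sum_const, Fin.card_Iio, nsmul_eq_mul]

lemma sum_Ioi_add {n : ℕ} (hn : 1 ≤ n) (f : Fin n → ℝ) :
    ∑ i, ∑ j ∈ Finset.Ioi i, (f i + f j) = ((n : ℝ) - 1) * ∑ i, f i := by
  rw [Finset.sum_congr rfl (fun i _ => Finset.sum_add_distrib), Finset.sum_add_distrib,
    sum_Ioi_swap]
  have h1 : ∀ i : Fin n, ∑ j ∈ Finset.Ioi i, f i = ((n - 1 - (i:ℕ) : ℕ) : ℝ) * f i := by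
    intro i; simp [Finset.sum_const, Fin.card_Ioi, nsmul_eq_mul]
  rw [Finset.sum_congr rfl (fun i _ => h1 i), ← Finset.sum_add_distrib, Finset.mul_sum]
  refine Finset.sum_congr rfl fun i _ => ?_
  have hi : (i : ℕ) ≤ n - 1 := by omega
  have : ((n - 1 - (i:ℕ) : ℕ) : ℝ) = (n:ℝ) - 1 - (i:ℕ) := by
    push_cast [Nat.cast_sub hi, Nat.cast_sub (by omega : 1 ≤ n)]; ring
  rw [this]; ring

lemma amgm_eq_case {ι : Type*} (t : Finset ι) (ht : t.Nonempty) (z : ι → ℝ)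
    (hz : ∀ i ∈ t, 0 < z i)
    (h : (∏ i ∈ t, z i) ^ ((1 : ℝ) / t.card) = (∑ i ∈ t, z i) / t.card) :
    ∀ i ∈ t, ∀ j ∈ t, z i = z j := by
  have hcard : 0 < (t.card : ℝ) := by exact_mod_cast Finset.card_pos.2 ht
  set w : ι → ℝ := fun _ => 1 / t.card with hw
  have h₀ : ∀ i ∈ t, 0 < w i := fun i _ => by positivity
  have h₁ : ∑ i ∈ t, w i = 1 := by
    simp [hw, Finset.sum_const, nsmul_eq_mul]
    field_simp
  have hmem : ∀ i ∈ t, z i ∈ Set.Ioi (0:ℝ) := fun i hi => hz i hi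
  have hmean : ∑ i ∈ t, w i • z i = (∑ i ∈ t, z i) / t.card := by
    simp [hw, smul_eq_mul, Finset.mul_sum, div_eq_inv_mul]
  have hprod : 0 < ∏ i ∈ t, z i := Finset.prod_pos hz
  have hlog : Real.log ((∑ i ∈ t, z i) / t.card) = ∑ i ∈ t, w i • Real.log (z i) := by
    rw [← h, Real.log_rpow hprod, Real.log_prod (fun i hi => (hz i hi).ne'),
      Finset.mul_sum]
    refine Finset.sum_congr rfl fun i hi => ?_
    simp only [hw, smul_eq_mul]
  have key := (strictConcaveOn_log_Ioi.map_sum_eq_iff h₀ h₁ hmem).1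
    (by rw [hmean, hlog])
  intro i hi j hj
  rw [key i hi, key j hj]

lemma card_pairs (n : ℕ) :
    2 * ((Finset.univ : Finset (Fin n)).sigma fun i => Finset.Ioi i).card = n * (n - 1) := by
  rw [Finset.card_sigma]
  have : ∀ i : Fin n, (Finset.Ioi i).card = n - 1 - (i : ℕ) := fun i => Fin.card_Ioi i
  rw [Finset.sum_congr rfl fun i _ => this i, Fin.sum_univ_eq_sum_range (fun k => n - 1 - k) n,
    Finset.sum_range_reflect (fun k => k) n]
  rw [mul_comm]
  rw [Finset.sum_range_id_mul_two n]

lemma prod_pairs {n : ℕ} (y : Fin n → ℝ) :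
    ∏ p ∈ ((Finset.univ : Finset (Fin n)).sigma fun i => Finset.Ioi i), (y p.1 * y p.2)
      = (∏ i, y i) ^ (n - 1) := by
  rw [Finset.prod_sigma]
  have h1 : ∀ i : Fin n, ∏ j ∈ Finset.Ioi i, (y i * y j)
      = y i ^ (n - 1 - (i:ℕ)) * ∏ j ∈ Finset.Ioi i, y j := by
    intro i
    rw [Finset.prod_mul_distrib, Finset.prod_const, Fin.card_Ioi]
  rw [Finset.prod_congr rfl fun i _ => h1 i, Finset.prod_mul_distrib]
  have h2 : ∏ i : Fin n, ∏ j ∈ Finset.Ioi i, y j = ∏ j : Fin n, y j ^ (j : ℕ) := by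
    rw [Finset.prod_comm' (t' := Finset.univ) (s' := fun j => Finset.Iio j)
      (by intro x y; simp [and_comm])]
    simp [Finset.prod_const, Fin.card_Iio]
  rw [h2, ← Finset.prod_mul_distrib, ← Finset.prod_pow]
  refine Finset.prod_congr rfl fun i _ => ?_
  rw [← pow_add]
  congr 1
  omega

/-- Equality case of (3.1): `A - G = (1/(n(n-1))) ∑_{i<j} (√(x i) - √(x j))^2` if and only if
(i) `n = 2`, or (ii) all but one of the `x i` are zero, or (iii) all the `x i` are equal. -/
theorem second_strong_cauchy_equality_iff (n : ℕ) (hn : 2 ≤ n) (x : Fin n → ℝ)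
    (hx : ∀ i, 0 ≤ x i)
    (A G : ℝ) (hA : A = (∑ i, x i) / n) (hG : G = (∏ i, x i) ^ ((1 : ℝ) / n)) :
    A - G =
        (1 / (n * (n - 1)) : ℝ) *
          ∑ i, ∑ j ∈ Finset.Ioi i, (Real.sqrt (x i) - Real.sqrt (x j)) ^ 2 ↔
      n = 2 ∨ (∃ i, ∀ j, j ≠ i → x j = 0) ∨ (∀ i j, x i = x j) := by
  have hn0 : (0:ℝ) < n := by positivity
  have hn1 : (0:ℝ) < (n:ℝ) - 1 := by
    have : (2:ℝ) ≤ n := by exact_mod_cast hn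
    linarith
  set y : Fin n → ℝ := fun i => Real.sqrt (x i) with hy
  have hy0 : ∀ i, 0 ≤ y i := fun i => Real.sqrt_nonneg _
  have hysq : ∀ i, y i ^ 2 = x i := fun i => Real.sq_sqrt (hx i)
  set c : ℝ := 1 / ((n:ℝ) * ((n:ℝ) - 1)) with hc
  have hcpos : 0 < c := by positivity
  set t : Finset ((_ : Fin n) × Fin n) :=
    (Finset.univ : Finset (Fin n)).sigma fun i => Finset.Ioi i with ht
  have hmemt : ∀ p : (_ : Fin n) × Fin n, p ∈ t ↔ p.1 < p.2 := by
    intro p; simp [ht, Finset.mem_sigma]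
  set T : ℝ := ∑ p ∈ t, y p.1 * y p.2 with hTdef
  have hT : T = ∑ i, ∑ j ∈ Finset.Ioi i, y i * y j := by
    rw [hTdef, ht, Finset.sum_sigma]
  set Q : ℝ := ∑ i, x i with hQ
  -- the sum of squares
  have hS : ∑ i, ∑ j ∈ Finset.Ioi i, (y i - y j) ^ 2 = ((n:ℝ) - 1) * Q - 2 * T := by
    have e : ∀ i j : Fin n, (y i - y j) ^ 2 = (x i + x j) - 2 * (y i * y j) := by
      intro i j
      have : (y i - y j) ^ 2 = y i ^ 2 + y j ^ 2 - 2 * (y i * y j) := by ring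
      rw [this, hysq i, hysq j]
    calc ∑ i, ∑ j ∈ Finset.Ioi i, (y i - y j) ^ 2
        = ∑ i, ∑ j ∈ Finset.Ioi i, ((x i + x j) - 2 * (y i * y j)) := by
          exact Finset.sum_congr rfl fun i _ => Finset.sum_congr rfl fun j _ => e i j
      _ = (∑ i, ∑ j ∈ Finset.Ioi i, (x i + x j))
            - ∑ i, ∑ j ∈ Finset.Ioi i, 2 * (y i * y j) := by
          rw [← Finset.sum_sub_distrib]
          exact Finset.sum_congr rfl fun i _ => Finset.sum_sub_distrib _ _
      _ = ((n:ℝ) - 1) * Q - 2 * T := by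
          rw [sum_Ioi_add (by omega) x, hT]
          congr 1
          rw [Finset.mul_sum]
          exact Finset.sum_congr rfl fun i _ => by rw [Finset.mul_sum]
  have hNat : 2 * t.card = n * (n - 1) := by rw [ht]; exact card_pairs n
  have hcard : (2 : ℝ) * t.card = (n:ℝ) * ((n:ℝ) - 1) := by
    have h' := congrArg (fun m : ℕ => (m : ℝ)) hNat
    push_cast [Nat.cast_sub (by omega : 1 ≤ n)] at h'
    linarith
  -- main algebraic reduction
  have main : (A - G = c * ∑ i, ∑ j ∈ Finset.Ioi i, (y i - y j) ^ 2) ↔ G = 2 * c * T := by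
    rw [hS, hA]
    have e1 : c * (((n:ℝ) - 1) * Q - 2 * T) = Q / n - 2 * c * T := by
      rw [hc]; field_simp
    rw [e1]
    constructor <;> intro h <;> linarith
  rw [main]
  constructor
  · -- forward
    intro h
    by_cases hn2 : n = 2
    · exact Or.inl hn2
    have hn3 : 3 ≤ n := by omega
    by_cases hzero : ∃ k, x k = 0
    · -- some zero: G = 0, so T = 0, so all pair products vanish
      obtain ⟨k, hk⟩ := hzero
      have hGz : G = 0 := by
        rw [hG, Finset.prod_eq_zero (Finset.mem_univ k) hk,
          Real.zero_rpow (by positivity)]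
      have hTz : T = 0 := by
        have := h; rw [hGz] at this
        have h2 : 2 * c * T = 0 := this.symm
        have : T = 0 := by
          rcases mul_eq_zero.1 h2 with h3 | h3
          · exact absurd h3 (by positivity)
          · exact h3
        exact this
      have hall : ∀ p ∈ t, y p.1 * y p.2 = 0 := by
        intro p hp
        have hnn : ∀ p ∈ t, 0 ≤ y p.1 * y p.2 :=
          fun q _ => mul_nonneg (hy0 _) (hy0 _)
        exact (Finset.sum_eq_zero_iff_of_nonneg hnn).1 (hTdef.symm.trans hTz) p hp
      have hpair : ∀ a b : Fin n, a < b → x a = 0 ∨ x b = 0 := by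
        intro a b hab
        have := hall ⟨a, b⟩ ((hmemt ⟨a, b⟩).2 hab)
        rcases mul_eq_zero.1 this with h1 | h1
        · exact Or.inl ((Real.sqrt_eq_zero (hx a)).1 h1)
        · exact Or.inr ((Real.sqrt_eq_zero (hx b)).1 h1)
      by_cases hex : ∃ k, x k ≠ 0
      · obtain ⟨i, hi⟩ := hex
        refine Or.inr (Or.inl ⟨i, fun j hj => ?_⟩)
        rcases lt_trichotomy j i with hlt | heq | hgt
        · rcases hpair j i hlt with h1 | h1
          · exact h1
          · exact absurd h1 hi
        · exact absurd heq hj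
        · rcases hpair i j hgt with h1 | h1
          · exact absurd h1 hi
          · exact h1
      · push_neg at hex
        exact Or.inr (Or.inl ⟨⟨0, by omega⟩, fun j _ => hex j⟩)
    · -- all positive: AM-GM equality case
      push_neg at hzero
      have hxpos : ∀ i, 0 < x i := fun i => (hx i).lt_of_ne' (hzero i)
      have hypos : ∀ i, 0 < y i := fun i => Real.sqrt_pos.2 (hxpos i)
      have htne : t.Nonempty := by
        refine ⟨⟨⟨0, by omega⟩, ⟨1, by omega⟩⟩, (hmemt _).2 ?_⟩
        simp [Fin.lt_def]
      have hcardpos : 0 < (t.card : ℝ) := by exact_mod_cast Finset.card_pos.2 htne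
      set P : ℝ := ∏ i, y i with hP
      have hPpos : 0 < P := Finset.prod_pos fun i _ => hypos i
      have hprodx : ∏ i, x i = P ^ 2 := by
        rw [hP, ← Finset.prod_pow]
        exact Finset.prod_congr rfl fun i _ => (hysq i).symm
      -- G = P ^ (2/n)
      have hGP : G = P ^ ((2 : ℝ) / n) := by
        rw [hG, hprodx, ← Real.rpow_natCast P 2, ← Real.rpow_mul hPpos.le]
        congr 1
        push_cast
        ring
      -- GM of pair products
      have hprodt : ∏ p ∈ t, y p.1 * y p.2 = P ^ (n - 1) := by
        rw [ht, prod_pairs y, ← hP]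
      have hGM : (∏ p ∈ t, y p.1 * y p.2) ^ ((1:ℝ) / t.card) = G := by
        rw [hprodt, ← Real.rpow_natCast P (n - 1),
          ← Real.rpow_mul hPpos.le, hGP]
        congr 1
        have hn1cast : ((n - 1 : ℕ) : ℝ) = (n:ℝ) - 1 := by
          push_cast [Nat.cast_sub (by omega : 1 ≤ n)]; ring
        rw [hn1cast]
        field_simp
        linear_combination -hcard
      -- AM of pair products
      have hAM : (∑ p ∈ t, y p.1 * y p.2) / t.card = G := by
        rw [← hTdef, h, hc]
        field_simp
        linear_combination -T * hcard
      have hzpos : ∀ p ∈ t, 0 < y p.1 * y p.2 :=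
        fun p _ => mul_pos (hypos _) (hypos _)
      have hallEq := amgm_eq_case t htne (fun p => y p.1 * y p.2) hzpos
        (by rw [hGM, hAM])
      -- conclude all x equal
      refine Or.inr (Or.inr fun i j => ?_)
      by_cases hij : i = j
      · rw [hij]
      -- find a third index
      have hkex : ∃ k : Fin n, k ≠ i ∧ k ≠ j := by
        have hlt : (({i, j} : Finset (Fin n))ᶜ).Nonempty := by
          rw [← Finset.card_pos, Finset.card_compl]
          have h2 : ({i, j} : Finset (Fin n)).card ≤ 2 := by
            apply le_trans (Finset.card_insert_le _ _)
            simp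
          have : Fintype.card (Fin n) = n := Fintype.card_fin n
          omega
        obtain ⟨k, hk⟩ := hlt
        simp only [Finset.mem_compl, Finset.mem_insert, Finset.mem_singleton, not_or] at hk
        exact ⟨k, hk.1, hk.2⟩
      obtain ⟨k, hki, hkj⟩ := hkex
      have hup : ∀ a b : Fin n, a ≠ b → ∃ p ∈ t, y p.1 * y p.2 = y a * y b := by
        intro a b hab
        rcases lt_or_gt_of_ne hab with hlt | hgt
        · exact ⟨⟨a, b⟩, (hmemt _).2 hlt, rfl⟩
        · exact ⟨⟨b, a⟩, (hmemt _).2 hgt, mul_comm _ _⟩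
      obtain ⟨p, hp, hp2⟩ := hup i k (Ne.symm hki)
      obtain ⟨q, hq, hq2⟩ := hup j k (Ne.symm hkj)
      have : y i * y k = y j * y k := by
        rw [← hp2, ← hq2]
        exact hallEq p hp q hq
      have hyij : y i = y j := mul_right_cancel₀ (hypos k).ne' this
      rw [← hysq i, ← hysq j, hyij]
  · -- backward
    rintro (hn2 | ⟨i, hi⟩ | hall)
    · -- n = 2
      subst hn2
      have hT2 : T = y 0 * y 1 := by
        rw [hT, Fin.sum_univ_two]
        have h0 : (Finset.Ioi (0 : Fin 2)) = {1} := by decide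
        have h1 : (Finset.Ioi (1 : Fin 2)) = ∅ := by decide
        rw [h0, h1]
        simp
      have hG2 : G = y 0 * y 1 := by
        rw [hG, Fin.prod_univ_two]
        have : ((2:ℕ):ℝ) = 2 := by norm_num
        rw [this, ← Real.sqrt_eq_rpow, Real.sqrt_mul (hx 0)]
      rw [hG2, hT2, hc]
      norm_num
    · -- all but one zero
      have hGz : G = 0 := by
        have : ∃ j : Fin n, j ≠ i := by
          by_cases h0 : i = ⟨0, by omega⟩
          · exact ⟨⟨1, by omega⟩, by simp [h0, Fin.ext_iff]⟩
          · exact ⟨⟨0, by omega⟩, fun h => h0 h.symm⟩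
        obtain ⟨j, hj⟩ := this
        rw [hG, Finset.prod_eq_zero (Finset.mem_univ j) (hi j hj),
          Real.zero_rpow (by positivity)]
      have hTz : T = 0 := by
        rw [hTdef]
        refine Finset.sum_eq_zero fun p hp => ?_
        have hlt : p.1 < p.2 := (hmemt p).1 hp
        by_cases h1 : p.1 = i
        · have : p.2 ≠ i := by rw [← h1]; exact hlt.ne'
          have : x p.2 = 0 := hi p.2 this
          simp [hy, this]
        · have : x p.1 = 0 := hi p.1 h1
          simp [hy, this]
      rw [hGz, hTz]; ring
    · -- all equal
      set a : ℝ := x ⟨0, by omega⟩ with ha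
      have hax : ∀ i, x i = a := fun i => hall i ⟨0, by omega⟩
      have ha0 : 0 ≤ a := hx _
      have hGa : G = a := by
        rw [hG, Finset.prod_congr rfl fun i _ => hax i, Finset.prod_const,
          Finset.card_univ, Fintype.card_fin, ← Real.rpow_natCast a n,
          ← Real.rpow_mul ha0, mul_one_div, div_self hn0.ne', Real.rpow_one]
      have hTa : T = t.card * a := by
        rw [hTdef]
        rw [Finset.sum_congr rfl fun p (_ : p ∈ t) => show y p.1 * y p.2 = a by
          simp only [hy]; rw [hax p.1, hax p.2, Real.mul_self_sqrt ha0]]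
        rw [Finset.sum_const, nsmul_eq_mul]
      rw [hGa, hTa, hc]
      field_simp
      linear_combination -a * hcard
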